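/- The infinite series ∑_{n=1}^∞ 1/(n(4n-1)) converges to (6 ln 2 - π)/2. -/

import Mathlib

open Real MeasureTheory intervalIntegral Set
open scoped Interval

noncomputable def gg : ℝ → ℝ := fun x => 4 * x ^ 2 / ((1 + x) * (1 + x ^ 2))

lemma geom_sum {x : ℝ} (hx : x ∈ Set.Ioo (0:ℝ) 1) :
    HasSum (fun n : ℕ+ => 4 * x ^ (4 * (n:ℕ) - 2) * (1 - x)) (gg x) := by
  obtain ⟨hx0, hx1⟩ := hx
  have hx4 : x ^ 4 < 1 := pow_lt_one₀ (le_of_lt hx0) hx1 (by norm_num)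
  have h := (hasSum_geometric_of_lt_one (by positivity) hx4).mul_left (4 * x ^ 2 * (1 - x))
  have he := (Equiv.pnatEquivNat.hasSum_iff
    (f := fun k : ℕ => 4 * x ^ 2 * (1 - x) * (x ^ 4) ^ k)
    (a := 4 * x ^ 2 * (1 - x) * (1 - x ^ 4)⁻¹)).mpr h
  have hfun : (fun n : ℕ+ => (4 * x ^ 2 * (1 - x)) * (x ^ 4) ^ (Equiv.pnatEquivNat n))
      = fun n : ℕ+ => 4 * x ^ (4 * (n:ℕ) - 2) * (1 - x) := by
    funext n
    have hn : 1 ≤ (n : ℕ) := n.2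
    have : 4 * (n:ℕ) - 2 = 2 + 4 * ((n:ℕ) - 1) := by omega
    simp only [Equiv.pnatEquivNat, Equiv.coe_fn_mk, PNat.natPred]
    rw [this, pow_add, ← pow_mul]
    ring
  have hval : 4 * x ^ 2 * (1 - x) * (1 - x ^ 4)⁻¹ = gg x := by
    have h1 : (1:ℝ) - x ^ 4 = (1 - x) * ((1 + x) * (1 + x ^ 2)) := by ring
    have hne : (1:ℝ) - x ≠ 0 := by linarith
    have hne2 : (1:ℝ) + x ≠ 0 := by linarith
    have hne3 : (1:ℝ) + x ^ 2 ≠ 0 := by positivity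
    rw [gg, h1]
    field_simp
  simp only [Function.comp_def] at he
  rwa [hfun, hval] at he

lemma term_integral (n : ℕ+) :
    ∫ x in (0:ℝ)..1, 4 * x ^ (4 * (n:ℕ) - 2) * (1 - x) = 1 / ((n:ℝ) * (4 * (n:ℝ) - 1)) := by
  have hn : 1 ≤ (n : ℕ) := n.2
  have hfun : (fun x : ℝ => 4 * x ^ (4 * (n:ℕ) - 2) * (1 - x))
      = fun x : ℝ => 4 * x ^ (4 * (n:ℕ) - 2) - 4 * x ^ (4 * (n:ℕ) - 1) := by
    funext x
    have : 4 * (n:ℕ) - 1 = (4 * (n:ℕ) - 2) + 1 := by omega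
    rw [this, pow_succ]
    ring
  rw [hfun, intervalIntegral.integral_sub
      (((intervalIntegrable_pow _).const_mul 4))
      (((intervalIntegrable_pow _).const_mul 4)),
    intervalIntegral.integral_const_mul, intervalIntegral.integral_const_mul,
    integral_pow, integral_pow]
  simp only [one_pow]
  rw [zero_pow (by omega : (4 * (n:ℕ) - 2) + 1 ≠ 0),
    zero_pow (by omega : (4 * (n:ℕ) - 1) + 1 ≠ 0)]
  have e1 : ((4 * (n:ℕ) - 2 : ℕ) : ℝ) = 4 * (n:ℝ) - 2 := by
    rw [Nat.cast_sub (by omega)]; push_cast; ring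
  have e2 : ((4 * (n:ℕ) - 1 : ℕ) : ℝ) = 4 * (n:ℝ) - 1 := by
    rw [Nat.cast_sub (by omega)]; push_cast; ring
  rw [e1, e2, show 4*(n:ℝ)-2+1 = 4*(n:ℝ)-1 by ring, show 4*(n:ℝ)-1+1 = 4*(n:ℝ) by ring]
  have hnr : (1:ℝ) ≤ (n:ℝ) := by exact_mod_cast hn
  have hne1 : 4 * (n:ℝ) - 1 ≠ 0 := by nlinarith
  have hne2 : (n:ℝ) ≠ 0 := by positivity
  field_simp
  ring

lemma gg_integral : ∫ x in (0:ℝ)..1, gg x = (6 * Real.log 2 - π) / 2 := by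
  have hderiv : ∀ x ∈ Set.uIcc (0:ℝ) 1,
      HasDerivAt (fun y => 2 * Real.log (1 + y) + Real.log (1 + y ^ 2) - 2 * Real.arctan y)
        (gg x) x := by
    intro x hx
    rw [Set.uIcc_of_le (by norm_num : (0:ℝ) ≤ 1)] at hx
    obtain ⟨hx0, hx1⟩ := hx
    have hne2 : (1:ℝ) + x ≠ 0 := by linarith
    have hne3 : (1:ℝ) + x ^ 2 ≠ 0 := by positivity
    have d1 : HasDerivAt (fun y : ℝ => Real.log (1 + y)) (1 / (1 + x)) x := by
      simpa using (((hasDerivAt_id x).const_add 1).log hne2)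
    have d2 : HasDerivAt (fun y : ℝ => Real.log (1 + y ^ 2)) (2 * x / (1 + x ^ 2)) x := by
      have := (((hasDerivAt_pow 2 x).const_add 1).log hne3)
      simpa using this
    have d3 : HasDerivAt Real.arctan (1 / (1 + x ^ 2)) x := Real.hasDerivAt_arctan x
    have := ((d1.const_mul 2).add d2).sub (d3.const_mul 2)
    refine HasDerivAt.congr_deriv this ?_
    rw [gg]
    field_simp
    ring
  have hcont : ContinuousOn gg (Set.uIcc (0:ℝ) 1) := by
    apply ContinuousOn.div
    · fun_prop
    · fun_prop
    · intro x hx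
      rw [Set.uIcc_of_le (by norm_num : (0:ℝ) ≤ 1)] at hx
      obtain ⟨hx0, hx1⟩ := hx
      have : (0:ℝ) < 1 + x := by linarith
      positivity
  rw [intervalIntegral.integral_eq_sub_of_hasDerivAt hderiv
    (hcont.intervalIntegrable)]
  norm_num [Real.arctan_one, Real.arctan_zero, Real.log_one]
  ring

theorem stmt_2 : HasSum (fun n : ℕ+ => 1 / ((n : ℝ) * (4*(n : ℝ)-1))) ((6 * Real.log 2 - π) / 2) := by
  have hne : ∀ᵐ t : ℝ, t ≠ (1:ℝ) := by
    rw [MeasureTheory.ae_iff]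
    simpa using MeasureTheory.measure_singleton (1:ℝ)
  have key : HasSum (fun n : ℕ+ => ∫ x in (0:ℝ)..1, 4 * x ^ (4 * (n:ℕ) - 2) * (1 - x))
      (∫ x in (0:ℝ)..1, gg x) := by
    apply intervalIntegral.hasSum_integral_of_dominated_convergence
      (bound := fun (n : ℕ+) (x : ℝ) => 4 * x ^ (4 * (n:ℕ) - 2) * (1 - x))
    · intro n
      exact (by fun_prop :
        Continuous fun t : ℝ => 4 * t ^ (4 * (n:ℕ) - 2) * (1 - t)).aestronglyMeasurable
    · intro n
      filter_upwards with t ht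
      rw [Set.uIoc_of_le (by norm_num : (0:ℝ) ≤ 1)] at ht
      obtain ⟨ht0, ht1⟩ := ht
      have h1 : (0:ℝ) ≤ 4 * t ^ (4 * (n:ℕ) - 2) * (1 - t) := by
        have : (0:ℝ) ≤ 1 - t := by linarith
        positivity
      rw [Real.norm_eq_abs, abs_of_nonneg h1]
    · filter_upwards [hne] with t htne ht
      rw [Set.uIoc_of_le (by norm_num : (0:ℝ) ≤ 1)] at ht
      obtain ⟨ht0, ht1⟩ := ht
      exact (geom_sum ⟨ht0, lt_of_le_of_ne ht1 htne⟩).summable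
    · have hcont : IntervalIntegrable gg volume 0 1 := by
        apply ContinuousOn.intervalIntegrable
        apply ContinuousOn.div
        · fun_prop
        · fun_prop
        · intro x hx
          rw [Set.uIcc_of_le (by norm_num : (0:ℝ) ≤ 1)] at hx
          obtain ⟨hx0, hx1⟩ := hx
          have : (0:ℝ) < 1 + x := by linarith
          positivity
      apply hcont.congr_ae
      have h1 : ∀ᵐ t ∂(volume.restrict (Ι (0:ℝ) 1)), t ≠ (1:ℝ) :=
        MeasureTheory.ae_restrict_of_ae hne
      have h2 : ∀ᵐ t ∂(volume.restrict (Ι (0:ℝ) 1)), t ∈ Ι (0:ℝ) 1 :=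
        MeasureTheory.ae_restrict_mem measurableSet_uIoc
      filter_upwards [h1, h2] with t htne ht
      rw [Set.uIoc_of_le (by norm_num : (0:ℝ) ≤ 1)] at ht
      obtain ⟨ht0, ht1⟩ := ht
      exact ((geom_sum ⟨ht0, lt_of_le_of_ne ht1 htne⟩).tsum_eq).symm
    · filter_upwards [hne] with t htne ht
      rw [Set.uIoc_of_le (by norm_num : (0:ℝ) ≤ 1)] at ht
      obtain ⟨ht0, ht1⟩ := ht
      exact geom_sum ⟨ht0, lt_of_le_of_ne ht1 htne⟩
  rw [gg_integral] at key
  have hfun : (fun n : ℕ+ => ∫ x in (0:ℝ)..1, 4 * x ^ (4 * (n:ℕ) - 2) * (1 - x))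
      = fun n : ℕ+ => 1 / ((n : ℝ) * (4*(n : ℝ)-1)) := by
    funext n; exact term_integral n
  rwa [hfun] at key
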